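/- arXiv:2004.03288 — 2 statements merged into one kernel-verified Lean document; each statement's English description precedes it below -/
import Mathlib

section
/- Let L ∈ ℝ^{2n×2} have full column rank and let D̂ = [[ĉ, f̂],[0, ĉ⁻¹]] be the optimal scaling with ĉ = ‖L₂‖₂/(det(LᵀL))^{1/4} and f̂ = −(L₁ᵀL₂)/(‖L₂‖₂ (det(LᵀL))^{1/4}). Then the squared Frobenius norm of D̂ satisfies ‖D̂‖_F² = ‖L‖_F² / √(det(LᵀL)). -/
open Matrix

noncomputable def enorm' {m : ℕ} (v : Fin m → ℝ) : ℝ := Real.sqrt (∑ i, v i ^ 2)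

noncomputable def frob {m n : ℕ} (A : Matrix (Fin m) (Fin n) ℝ) : ℝ :=
  Real.sqrt (∑ i, ∑ j, A i j ^ 2)

noncomputable def specNorm {m n : ℕ} (A : Matrix (Fin m) (Fin n) ℝ) : ℝ :=
  ‖(Matrix.toEuclideanLin A).toContinuousLinearMap‖

noncomputable def sigmaMax (B : Matrix (Fin 2) (Fin 2) ℝ) : ℝ :=
  Real.sqrt (max ((Matrix.isHermitian_iff_isSymm.mpr (Matrix.isSymm_transpose_mul_self B)).eigenvalues 0)
                 ((Matrix.isHermitian_iff_isSymm.mpr (Matrix.isSymm_transpose_mul_self B)).eigenvalues 1))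

noncomputable def sigmaMin (B : Matrix (Fin 2) (Fin 2) ℝ) : ℝ :=
  Real.sqrt (min ((Matrix.isHermitian_iff_isSymm.mpr (Matrix.isSymm_transpose_mul_self B)).eigenvalues 0)
                 ((Matrix.isHermitian_iff_isSymm.mpr (Matrix.isSymm_transpose_mul_self B)).eigenvalues 1))

theorem frob_sq_of_optimal_scaling {n : ℕ} (L : Matrix (Fin (2*n)) (Fin 2) ℝ)
    (hLI : LinearIndependent ℝ ![fun i => L i 0, fun i => L i 1])
    (cop fop : ℝ)
    (hc : cop = enorm' (fun i => L i 1) / Real.sqrt (Real.sqrt (Lᵀ * L).det))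
    (hf : fop = -(∑ i, L i 0 * L i 1) /
        (enorm' (fun i => L i 1) * Real.sqrt (Real.sqrt (Lᵀ * L).det))) :
    frob (!![cop, fop; 0, cop⁻¹] : Matrix (Fin 2) (Fin 2) ℝ) ^ 2 =
      frob L ^ 2 / Real.sqrt (Lᵀ * L).det := by
  obtain ⟨hv1ne, hindep⟩ := linearIndependent_fin2.mp hLI
  set a : ℝ := ∑ i, L i 0 ^ 2 with ha
  set b : ℝ := ∑ i, L i 1 ^ 2 with hb
  set s : ℝ := ∑ i, L i 0 * L i 1 with hs
  have hbpos : 0 < b := by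
    have : (fun i => L i 1) ≠ 0 := by simpa using hv1ne
    obtain ⟨i, hi⟩ := Function.ne_iff.mp this
    exact Finset.sum_pos' (fun j _ => sq_nonneg _)
      ⟨i, Finset.mem_univ i, by simp at hi; positivity⟩
  have hdet : (Lᵀ * L).det = a * b - s ^ 2 := by
    rw [Matrix.det_fin_two]
    simp only [Matrix.mul_apply, Matrix.transpose_apply, ha, hb, hs]
    have h1 : ∀ k : Fin (2*n), L k 1 * L k 0 = L k 0 * L k 1 := fun k => mul_comm _ _
    have h2 : ∀ k : Fin (2*n), L k 0 * L k 0 = L k 0 ^ 2 := fun k => (sq _).symm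
    have h3 : ∀ k : Fin (2*n), L k 1 * L k 1 = L k 1 ^ 2 := fun k => (sq _).symm
    simp_rw [h1, h2, h3, sq]
  have hdpos : 0 < a * b - s ^ 2 := by
    set t : ℝ := s / b with ht
    have hne : (fun i => t * L i 1) ≠ (fun i => L i 0) := by
      have := hindep t
      simpa [funext_iff, smul_eq_mul] using this
    obtain ⟨i, hi⟩ := Function.ne_iff.mp hne
    have hpos : 0 < ∑ i, (L i 0 - t * L i 1) ^ 2 :=
      Finset.sum_pos' (fun j _ => sq_nonneg _)
        ⟨i, Finset.mem_univ i, by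
          have : L i 0 - t * L i 1 ≠ 0 := fun h => hi (by linarith [sub_eq_zero.mp h])
          positivity⟩
    have hexp : ∑ i, (L i 0 - t * L i 1) ^ 2 = a - 2 * t * s + t ^ 2 * b := by
      have h : ∀ i : Fin (2*n), (L i 0 - t * L i 1) ^ 2 =
          L i 0 ^ 2 - (2 * t) * (L i 0 * L i 1) + t ^ 2 * L i 1 ^ 2 := fun i => by ring
      simp_rw [h, Finset.sum_add_distrib, Finset.sum_sub_distrib, ← Finset.mul_sum]
      rfl
    rw [hexp, ht] at hpos
    have e : (a - 2 * (s / b) * s + (s / b) ^ 2 * b) * b = a * b - s ^ 2 := by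
      field_simp; ring
    have := mul_pos hpos hbpos
    rwa [e] at this
  have hd : 0 < (Lᵀ * L).det := by rw [hdet]; exact hdpos
  set D : ℝ := Real.sqrt ((Lᵀ * L).det) with hD
  have hDpos : 0 < D := Real.sqrt_pos.mpr hd
  have hD2 : D ^ 2 = a * b - s ^ 2 := by rw [hD, Real.sq_sqrt hd.le, hdet]
  have hsD : Real.sqrt D ^ 2 = D := Real.sq_sqrt hDpos.le
  have hsb : enorm' (fun i => L i 1) = Real.sqrt b := by rw [enorm']
  have hsb2 : Real.sqrt b ^ 2 = b := Real.sq_sqrt hbpos.le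
  have hsbpos : 0 < Real.sqrt b := Real.sqrt_pos.mpr hbpos
  have hsDpos : 0 < Real.sqrt D := Real.sqrt_pos.mpr hDpos
  have hfrobL : frob L ^ 2 = a + b := by
    rw [frob, Real.sq_sqrt (by positivity)]
    simp [Fin.sum_univ_two, Finset.sum_add_distrib, ha, hb]
  have hfrobD : frob (!![cop, fop; 0, cop⁻¹] : Matrix (Fin 2) (Fin 2) ℝ) ^ 2 =
      cop ^ 2 + fop ^ 2 + (cop⁻¹) ^ 2 := by
    rw [frob, Real.sq_sqrt (by positivity)]
    simp [Fin.sum_univ_two]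
  have hcop2 : cop ^ 2 = b / D := by
    rw [hc, hsb, div_pow, hsb2, hsD]
  have hfop2 : fop ^ 2 = s ^ 2 / (b * D) := by
    rw [hf, hsb, div_pow, neg_sq, mul_pow, hsb2, hsD]
  have hcopinv2 : (cop⁻¹) ^ 2 = D / b := by
    rw [hc, hsb, inv_div, div_pow, hsb2, hsD]
  rw [hfrobD, hfrobL, hcop2, hfop2, hcopinv2]
  field_simp
  linear_combination hD2
end

section
/- Let S ∈ ℝ^{2m×2} have linearly independent columns s and t. Among all matrices D⁻¹ = [[c⁻¹, −f],[0, c]] with c > 0, the Frobenius norm ‖S D⁻¹‖_F is minimized for c̆ = ‖s‖₂/(det(SᵀS))^{1/4} and f̆ = (sᵀt)/(‖s‖₂ (det(SᵀS))^{1/4}), and the minimal value is ‖S D̆⁻¹‖_F = √2 · δ with δ = (det(SᵀS))^{1/4}. -/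
open Matrix

theorem optimal_column_scaling_min {m : ℕ} (S : Matrix (Fin (2*m)) (Fin 2) ℝ)
    (hSI : LinearIndependent ℝ ![fun i => S i 0, fun i => S i 1])
    (δ cb fb : ℝ)
    (hδ : δ = Real.sqrt (Real.sqrt (Sᵀ * S).det))
    (hcb : cb = enorm' (fun i => S i 0) / δ)
    (hfb : fb = (∑ i, S i 0 * S i 1) / (enorm' (fun i => S i 0) * δ)) :
    frob (S * (!![cb⁻¹, -fb; 0, cb] : Matrix (Fin 2) (Fin 2) ℝ)) = Real.sqrt 2 * δ ∧
    (∀ c f : ℝ, 0 < c →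
      Real.sqrt 2 * δ ≤ frob (S * (!![c⁻¹, -f; 0, c] : Matrix (Fin 2) (Fin 2) ℝ))) := by
  classical
  set a : ℝ := ∑ i, S i 0 ^ 2 with ha'
  set b : ℝ := ∑ i, S i 0 * S i 1 with hb'
  set d : ℝ := ∑ i, S i 1 ^ 2 with hd'
  -- linear independence consequence
  have hli : ∀ g : Fin 2 → ℝ,
      ((fun i => g 0 * S i 0 + g 1 * S i 1) = 0) → ∀ j, g j = 0 := by
    intro g hg j
    refine Fintype.linearIndependent_iff.mp hSI g ?_ j
    funext i
    have := congrFun hg i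
    simpa [Fin.sum_univ_two] using this
  have ha : 0 < a := by
    rcases (Finset.sum_nonneg (fun i _ => sq_nonneg (S i 0))).lt_or_eq with h | h
    · exact h
    · exfalso
      have hz : ∀ i ∈ Finset.univ, S i 0 ^ 2 = 0 :=
        (Finset.sum_eq_zero_iff_of_nonneg (fun i _ => sq_nonneg (S i 0))).mp h.symm
      have h1 : (![1, 0] : Fin 2 → ℝ) 0 = 0 := by
        refine hli ![1, 0] ?_ 0
        funext i
        have hzi := pow_eq_zero_iff (n := 2) (by norm_num) |>.mp (hz i (Finset.mem_univ i))
        simp [hzi]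
      simp at h1
  have hD : 0 < a * d - b ^ 2 := by
    have hexp : ∑ i, (a * S i 1 - b * S i 0) ^ 2 = a * (a * d - b ^ 2) := by
      have step : ∀ i : Fin (2*m), (a * S i 1 - b * S i 0) ^ 2
          = a ^ 2 * S i 1 ^ 2 - (2 * a * b) * (S i 0 * S i 1) + b ^ 2 * S i 0 ^ 2 := by
        intro i; ring
      simp_rw [step, Finset.sum_add_distrib, Finset.sum_sub_distrib, ← Finset.mul_sum]
      ring
    rcases (Finset.sum_nonneg (fun i _ => sq_nonneg (a * S i 1 - b * S i 0))).lt_or_eq with h | h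
    · have h2 : 0 < a * (a * d - b ^ 2) := hexp ▸ h
      nlinarith [h2, ha]
    · exfalso
      have hz : ∀ i ∈ Finset.univ, (a * S i 1 - b * S i 0) ^ 2 = 0 :=
        (Finset.sum_eq_zero_iff_of_nonneg
          (fun i _ => sq_nonneg (a * S i 1 - b * S i 0))).mp h.symm
      have h1 : (![b, -a] : Fin 2 → ℝ) 1 = 0 := by
        refine hli ![b, -a] ?_ 1
        funext i
        have hzi : a * S i 1 - b * S i 0 = 0 :=
          pow_eq_zero_iff (n := 2) (by norm_num) |>.mp (hz i (Finset.mem_univ i))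
        show b * S i 0 + (-a) * S i 1 = (0 : Fin (2*m) → ℝ) i
        simp only [Pi.zero_apply]
        linarith
      have : -a = 0 := by simpa using h1
      linarith
  -- determinant
  have hdet : (Sᵀ * S).det = a * d - b ^ 2 := by
    rw [Matrix.det_fin_two]
    simp only [Matrix.mul_apply, Matrix.transpose_apply]
    have e1 : ∑ i, S i 0 * S i 0 = a := by simp [ha', pow_two]
    have e2 : ∑ i, S i 1 * S i 1 = d := by simp [hd', pow_two]
    have e3 : ∑ i, S i 1 * S i 0 = b := by simp only [hb', mul_comm]
    rw [e1, e2, e3]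
    rw [hb']
    ring
  have hδpos : 0 < δ := by
    rw [hδ, hdet]
    exact Real.sqrt_pos.mpr (Real.sqrt_pos.mpr hD)
  have hδ2 : δ ^ 2 = Real.sqrt (a * d - b ^ 2) := by
    rw [hδ, hdet, sq, Real.mul_self_sqrt (Real.sqrt_nonneg _)]
  have hδ4 : δ ^ 2 * δ ^ 2 = a * d - b ^ 2 := by
    rw [hδ2, Real.mul_self_sqrt hD.le]
  -- Frobenius norm squared expansion
  have hQ : ∀ c f : ℝ, ∑ i, ∑ j, (S * (!![c⁻¹, -f; 0, c] : Matrix (Fin 2) (Fin 2) ℝ)) i j ^ 2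
      = c⁻¹ ^ 2 * a + (f ^ 2 * a - 2 * (f * c) * b + c ^ 2 * d) := by
    intro c f
    have step : ∀ i : Fin (2*m),
        ∑ j, (S * (!![c⁻¹, -f; 0, c] : Matrix (Fin 2) (Fin 2) ℝ)) i j ^ 2
        = c⁻¹ ^ 2 * S i 0 ^ 2
          + (f ^ 2 * S i 0 ^ 2 - 2 * (f * c) * (S i 0 * S i 1) + c ^ 2 * S i 1 ^ 2) := by
      intro i
      rw [Fin.sum_univ_two]
      simp [Matrix.mul_apply, Fin.sum_univ_two]
      ring
    simp_rw [step, Finset.sum_add_distrib, Finset.sum_sub_distrib, ← Finset.mul_sum]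
    rfl
  -- key inequality
  have key : ∀ c f : ℝ, c ≠ 0 →
      2 * δ ^ 2 ≤ c⁻¹ ^ 2 * a + (f ^ 2 * a - 2 * (f * c) * b + c ^ 2 * d) := by
    intro c f hc
    have hc2 : 0 < c ^ 2 := by positivity
    have h1 : c⁻¹ ^ 2 * c ^ 2 = 1 := by field_simp
    have hid : a * c ^ 2 * ((c⁻¹ ^ 2 * a + (f ^ 2 * a - 2 * (f * c) * b + c ^ 2 * d)) - 2 * δ ^ 2)
        = (a - c ^ 2 * δ ^ 2) ^ 2 + c ^ 2 * (a * f - c * b) ^ 2 := by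
      linear_combination a ^ 2 * h1 - c ^ 4 * hδ4
    nlinarith [mul_pos ha hc2, hid, sq_nonneg (a - c ^ 2 * δ ^ 2), sq_nonneg (a * f - c * b)]
  -- the sqrt bridge
  have hsq2 : Real.sqrt (2 * δ ^ 2) = Real.sqrt 2 * δ := by
    rw [Real.sqrt_mul (by norm_num), Real.sqrt_sq hδpos.le]
  constructor
  · -- equality at optimum
    have hα : enorm' (fun i => S i 0) = Real.sqrt a := rfl
    have hαpos : 0 < Real.sqrt a := Real.sqrt_pos.mpr ha
    have hα2 : Real.sqrt a ^ 2 = a := Real.sq_sqrt ha.le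
    have hcb' : cb = Real.sqrt a / δ := by rw [hcb, hα]
    have hfb' : fb = b / (Real.sqrt a * δ) := by rw [hfb, hα]
    have e1 : cb ^ 2 = a / δ ^ 2 := by rw [hcb', div_pow, hα2]
    have e2 : cb⁻¹ ^ 2 = δ ^ 2 / a := by rw [inv_pow, e1, inv_div]
    have e3 : fb ^ 2 = b ^ 2 / (a * δ ^ 2) := by rw [hfb', div_pow, mul_pow, hα2]
    have e4 : fb * cb = b / δ ^ 2 := by rw [hfb', hcb']; field_simp
    have hQval : cb⁻¹ ^ 2 * a + (fb ^ 2 * a - 2 * (fb * cb) * b + cb ^ 2 * d) = 2 * δ ^ 2 := by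
      rw [e1, e2, e3, e4]
      field_simp
      linear_combination (-1 : ℝ) * hδ4
    rw [frob, hQ, hQval, hsq2]
  · intro c f hc
    rw [← hsq2, frob, hQ]
    exact Real.sqrt_le_sqrt (key c f hc.ne')
end
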